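/- Let (G, H, ∂, α) be a crossed module of topological groups where G is connected and abelian and the kernel of ∂ is discrete. Then the action α of G on H is trivial, and consequently H is abelian. -/

import Mathlib

/-- Let `(G, H, d, α)` be a crossed module of topological groups, where
`G` is connected and abelian and the kernel of `d` is a discrete subgroup of `H`.
Then the action `α` of `G` on `H` is trivial, and consequently `H` is abelian. -/
theorem crossedModule_connected_abelian_action_trivial
    {G H : Type*} [CommGroup G] [TopologicalSpace G] [IsTopologicalGroup G] [ConnectedSpace G]
    [Group H] [TopologicalSpace H] [IsTopologicalGroup H]
    (d : H →* G) (hd : Continuous d)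
    (α : G →* MulAut H) (hα : Continuous fun p : G × H => α p.1 p.2)
    (hequiv : ∀ (g : G) (h : H), d (α g h) = g * d h * g⁻¹)
    (hpeiffer : ∀ (h h' : H), α (d h) h' = h * h' * h⁻¹)
    (hker : DiscreteTopology d.ker) :
    (∀ (g : G) (h : H), α g h = h) ∧ ∀ (h h' : H), h * h' = h' * h := by
  have htriv : ∀ (g : G) (h : H), α g h = h := by
    intro g h
    have hmem : ∀ g : G, α g h * h⁻¹ ∈ d.ker := by
      intro g
      simp only [MonoidHom.mem_ker, map_mul, map_inv, hequiv]
      rw [mul_comm g (d h)]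
      group
    set f : G → d.ker := fun g => ⟨α g h * h⁻¹, hmem g⟩ with hf
    have hcont : Continuous f := by
      apply Continuous.subtype_mk
      exact ((hα.comp (continuous_id.prodMk continuous_const)).mul continuous_const)
    have hlc : IsLocallyConstant f := (IsLocallyConstant.iff_continuous f).2 hcont
    have := hlc.apply_eq_of_preconnectedSpace g 1
    have h1 : α g h * h⁻¹ = α (1 : G) h * h⁻¹ := congrArg Subtype.val this
    simp at h1
    simpa [mul_inv_eq_one] using h1
  refine ⟨htriv, fun h h' => ?_⟩
  have := hpeiffer h h'
  rw [htriv (d h) h'] at this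
  exact (eq_mul_inv_iff_mul_eq.mp this).symm
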